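/- Let x = P(x) be an MPS in n variables with least fixed point 0 ≤ q* ≤ 1, and suppose v > 0 is a vector with B(q*)·v ≤ v, where B is the Jacobian of P. Consider rounded-down Newton's method with rounding parameter h ≥ 2 + ⌈log₂(v_max / (v_min · ε))⌉: x^{[0]} = 0 and x^{[k+1]} is obtained by rounding each coordinate of N_P(x^{[k]}) down to the nearest nonnegative multiple of 2^{−h}. If every iterate is defined and satisfies 0 ≤ x^{[k]} ≤ q* for all k, then after g ≥ h − 1 iterations, ‖q* − x^{[g]}‖_∞ ≤ ε. -/

import Mathlib

open Matrix MvPolynomial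

/-- Evaluation of a vector of multivariate polynomials. -/
noncomputable def evalVec {n : ℕ} (P : Fin n → MvPolynomial (Fin n) ℝ) (x : Fin n → ℝ) :
    Fin n → ℝ := fun i => MvPolynomial.eval x (P i)

/-- The Jacobian matrix B(x)_{ij} = ∂P_i/∂x_j evaluated at x. -/
noncomputable def jacob {n : ℕ} (P : Fin n → MvPolynomial (Fin n) ℝ) (x : Fin n → ℝ) :
    Matrix (Fin n) (Fin n) ℝ :=
  Matrix.of fun i j => MvPolynomial.eval x (MvPolynomial.pderiv j (P i))

/-- The exact Newton operator N_P(z) = z + (I - B(z))⁻¹ (P(z) - z). -/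
noncomputable def newtonOp {n : ℕ} (P : Fin n → MvPolynomial (Fin n) ℝ) (z : Fin n → ℝ) :
    Fin n → ℝ := z + (1 - jacob P z)⁻¹ *ᵥ (evalVec P z - z)

/-! ### Auxiliary lemmas -/

lemma quad_trapezoid (F : Polynomial ℝ) (hF : F.natDegree ≤ 2) :
    F.eval 1 - F.eval 0 = (F.derivative.eval 0 + F.derivative.eval 1) / 2 := by
  have h3 : F.natDegree < 3 := by omega
  have hd : F.derivative.natDegree < 2 := by
    have := Polynomial.natDegree_derivative_le F; omega
  rw [Polynomial.eval_eq_sum_range' h3, Polynomial.eval_eq_sum_range' h3,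
    Polynomial.eval_eq_sum_range' hd, Polynomial.eval_eq_sum_range' hd]
  simp only [Finset.sum_range_succ, Finset.sum_range_zero, Polynomial.coeff_derivative]
  push_cast
  ring

lemma eval_aeval' {n : ℕ} (g : Fin n → Polynomial ℝ) (p : MvPolynomial (Fin n) ℝ) (s : ℝ) :
    Polynomial.eval s (MvPolynomial.aeval g p) =
      MvPolynomial.eval (fun j => Polynomial.eval s (g j)) p := by
  induction p using MvPolynomial.induction_on with
  | C a => simp
  | add p q hp hq => simp [hp, hq]
  | mul_X p i hp => simp [hp]

lemma deriv_aeval' {n : ℕ} (g : Fin n → Polynomial ℝ) (p : MvPolynomial (Fin n) ℝ) :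
    Polynomial.derivative (MvPolynomial.aeval g p) =
      ∑ j, MvPolynomial.aeval g (MvPolynomial.pderiv j p) * Polynomial.derivative (g j) := by
  induction p using MvPolynomial.induction_on with
  | C a => simp
  | add p q hp hq => simp [hp, hq, ← Finset.sum_add_distrib, add_mul]
  | mul_X p i hp =>
    simp only [_root_.map_mul, aeval_X, Polynomial.derivative_mul, hp, pderiv_mul, pderiv_X,
      map_add, add_mul]
    rw [Finset.sum_add_distrib]
    congr 1
    · rw [Finset.sum_mul]; congr 1; ext j; ring_nf
    · rw [Finset.sum_eq_single i]
      · simp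
      · intro j _ hji
        simp [Pi.single_apply, hji]
      · simp

lemma natDegree_aeval_le' {n : ℕ} (g : Fin n → Polynomial ℝ) (hg : ∀ j, (g j).natDegree ≤ 1)
    (p : MvPolynomial (Fin n) ℝ) :
    (MvPolynomial.aeval g p).natDegree ≤ p.totalDegree := by
  conv_lhs => rw [p.as_sum]
  rw [map_sum]
  apply Polynomial.natDegree_sum_le_of_forall_le
  intro m hm
  rw [aeval_monomial]
  apply le_trans (Polynomial.natDegree_mul_le)
  have h1 : (algebraMap ℝ (Polynomial ℝ) (coeff m p)).natDegree = 0 := by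
    simp [Polynomial.natDegree_C]
  rw [h1, zero_add]
  refine le_trans (Polynomial.natDegree_prod_le _ _) ?_
  calc ∑ j ∈ m.support, ((g j) ^ (m j)).natDegree
      ≤ ∑ j ∈ m.support, m j := by
        refine Finset.sum_le_sum (fun j _ => ?_)
        refine Polynomial.natDegree_pow_le.trans ?_
        calc m j * (g j).natDegree ≤ m j * 1 := Nat.mul_le_mul_left _ (hg j)
        _ = m j := mul_one _
    _ ≤ p.totalDegree := MvPolynomial.le_totalDegree hm

lemma taylor2 {n : ℕ} (p : MvPolynomial (Fin n) ℝ) (hp : p.totalDegree ≤ 2) (z q : Fin n → ℝ) :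
    MvPolynomial.eval q p - MvPolynomial.eval z p
      = (1/2) * ∑ j, (MvPolynomial.eval z (pderiv j p) + MvPolynomial.eval q (pderiv j p))
          * (q j - z j) := by
  set g : Fin n → Polynomial ℝ := fun j => Polynomial.C (z j) + Polynomial.C (q j - z j) * Polynomial.X with hg
  have hgdeg : ∀ j, (g j).natDegree ≤ 1 := by
    intro j
    refine (Polynomial.natDegree_add_le _ _).trans (max_le (by simp) ?_)
    exact (Polynomial.natDegree_C_mul_le _ _).trans (by simp)
  have hgev : ∀ s : ℝ, (fun j => Polynomial.eval s (g j)) = fun j => z j + (q j - z j) * s := by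
    intro s; funext j; simp [hg]
  have hg0 : (fun j => Polynomial.eval 0 (g j)) = z := by rw [hgev]; funext j; ring
  have hg1 : (fun j => Polynomial.eval 1 (g j)) = q := by rw [hgev]; funext j; ring
  have key := quad_trapezoid (MvPolynomial.aeval g p) ((natDegree_aeval_le' g hgdeg p).trans hp)
  rw [eval_aeval', eval_aeval', hg0, hg1, deriv_aeval'] at key
  have hder : ∀ s : ℝ, Polynomial.eval s (∑ j, MvPolynomial.aeval g (MvPolynomial.pderiv j p)
      * Polynomial.derivative (g j))
      = ∑ j, MvPolynomial.eval (fun j => Polynomial.eval s (g j)) (pderiv j p) * (q j - z j) := by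
    intro s
    rw [Polynomial.eval_finset_sum]
    congr 1; funext j
    rw [Polynomial.eval_mul, eval_aeval']
    congr 1
    simp [hg]
  rw [hder 0, hder 1, hg0, hg1] at key
  rw [key, ← Finset.sum_add_distrib, Finset.mul_sum, Finset.sum_div]
  exact Finset.sum_congr rfl (fun j _ => by ring)

lemma eval_nonneg' {n : ℕ} (p : MvPolynomial (Fin n) ℝ) (hp : ∀ m, 0 ≤ p.coeff m)
    {a : Fin n → ℝ} (ha : ∀ j, 0 ≤ a j) : 0 ≤ MvPolynomial.eval a p := by
  rw [MvPolynomial.eval_eq]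
  exact Finset.sum_nonneg (fun m _ =>
    mul_nonneg (hp m) (Finset.prod_nonneg fun j _ => pow_nonneg (ha j) _))

lemma eval_mono' {n : ℕ} (p : MvPolynomial (Fin n) ℝ) (hp : ∀ m, 0 ≤ p.coeff m)
    {a b : Fin n → ℝ} (ha : ∀ j, 0 ≤ a j) (hab : ∀ j, a j ≤ b j) :
    MvPolynomial.eval a p ≤ MvPolynomial.eval b p := by
  rw [MvPolynomial.eval_eq, MvPolynomial.eval_eq]
  refine Finset.sum_le_sum (fun m _ => ?_)
  refine mul_le_mul_of_nonneg_left ?_ (hp m)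
  refine Finset.prod_le_prod (fun j _ => pow_nonneg (ha j) _) (fun j _ => ?_)
  exact pow_le_pow_left₀ (ha j) (hab j) _

lemma coeff_pderiv_nonneg' {n : ℕ} (p : MvPolynomial (Fin n) ℝ) (hp : ∀ m, 0 ≤ p.coeff m)
    (j : Fin n) : ∀ m, 0 ≤ (MvPolynomial.pderiv j p).coeff m := by
  intro m
  conv => rw [p.as_sum]
  rw [map_sum, MvPolynomial.coeff_sum]
  refine Finset.sum_nonneg (fun d _ => ?_)
  rw [pderiv_monomial, MvPolynomial.coeff_monomial]
  split
  · exact mul_nonneg (hp d) (Nat.cast_nonneg _)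
  · exact le_rfl

/-! ### Matrix inverse nonnegativity -/

section MatrixNorm
attribute [local instance] Matrix.linftyOpNormedRing Matrix.linftyOpNormedAlgebra

lemma norm_le_of_row_sums {n : ℕ} (C : Matrix (Fin n) (Fin n) ℝ) (c : ℝ) (hc : 0 ≤ c)
    (h : ∀ i, ∑ j, ‖C i j‖ ≤ c) : ‖C‖ ≤ c := by
  rw [Matrix.linfty_opNorm_def, ← Real.coe_toNNReal c hc, NNReal.coe_le_coe]
  refine Finset.sup_le (fun i _ => ?_)
  rw [← NNReal.coe_le_coe, Real.coe_toNNReal c hc, NNReal.coe_sum]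
  simpa using h i

lemma pow_entry_nonneg {n : ℕ} (C : Matrix (Fin n) (Fin n) ℝ) (hC : ∀ i j, 0 ≤ C i j) :
    ∀ (k : ℕ) i j, 0 ≤ (C ^ k) i j := by
  intro k
  induction k with
  | zero => intro i j; by_cases hij : i = j <;> simp [pow_zero, Matrix.one_apply, hij]
  | succ k ih =>
    intro i j
    rw [pow_succ, Matrix.mul_apply]
    exact Finset.sum_nonneg fun l _ => mul_nonneg (ih i l) (hC l j)

/-- entry evaluation as a continuous linear map -/
noncomputable def entryCLM {n : ℕ} (i j : Fin n) :
    Matrix (Fin n) (Fin n) ℝ →L[ℝ] ℝ :=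
  LinearMap.toContinuousLinearMap
    { toFun := fun M => M i j
      map_add' := fun _ _ => rfl
      map_smul' := fun _ _ => rfl }

lemma core_inv_nonneg {n : ℕ} (C : Matrix (Fin n) (Fin n) ℝ) (hC : ∀ i j, 0 ≤ C i j)
    (hrow : ∀ i, ∑ j, C i j ≤ 1) (hdet : IsUnit (1 - C).det) :
    ∀ i j, 0 ≤ (1 - C)⁻¹ i j := by
  intro i j
  have hsC : ∀ s : ℝ, 0 ≤ s → s < 1 → ‖s • C‖ < 1 := by
    intro s hs0 hs1
    refine lt_of_le_of_lt (norm_le_of_row_sums _ s hs0 ?_) hs1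
    intro i'
    have he : ∀ j', ‖(s • C) i' j'‖ = s * C i' j' := by
      intro j'
      have : (s • C) i' j' = s * C i' j' := rfl
      rw [this, Real.norm_eq_abs, abs_of_nonneg (mul_nonneg hs0 (hC i' j'))]
    simp_rw [he, ← Finset.mul_sum]
    calc s * ∑ j', C i' j' ≤ s * 1 := mul_le_mul_of_nonneg_left (hrow i') hs0
      _ = s := mul_one s
  have hnn : ∀ s : ℝ, 0 ≤ s → s < 1 → 0 ≤ (Ring.inverse (1 - s • C)) i j := by
    intro s hs0 hs1
    have hlt := hsC s hs0 hs1
    have hsum : HasSum (fun k => (s • C) ^ k) (Ring.inverse (1 - s • C)) :=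
      hasSum_geom_series_inverse _ hlt
    have hsum2 : HasSum (fun k => ((s • C) ^ k) i j) ((Ring.inverse (1 - s • C)) i j) := by
      have := hsum.mapL (entryCLM i j)
      exact this
    refine hsum2.nonneg ?_
    intro k
    refine pow_entry_nonneg _ ?_ k i j
    intro i' j'
    exact mul_nonneg hs0 (hC i' j')
  have hunit : IsUnit ((1 : Matrix (Fin n) (Fin n) ℝ) - C) :=
    (Matrix.isUnit_iff_isUnit_det _).mpr hdet
  obtain ⟨u, hu⟩ := hunit
  have hcont : ContinuousAt Ring.inverse ((1 : Matrix (Fin n) (Fin n) ℝ) - C) := by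
    rw [← hu]
    exact NormedRing.inverse_continuousAt u
  have hmap : Continuous fun s : ℝ => (1 : Matrix (Fin n) (Fin n) ℝ) - s • C :=
    continuous_const.sub (continuous_id.smul continuous_const)
  have hfc : ContinuousAt
      (fun s : ℝ => (Ring.inverse ((1:Matrix (Fin n) (Fin n) ℝ) - s • C)) i j) 1 := by
    have h2 : ContinuousAt
        (fun s : ℝ => Ring.inverse ((1:Matrix (Fin n) (Fin n) ℝ) - s • C)) 1 := by
      have hcont' : ContinuousAt Ring.inverse ((1:Matrix (Fin n) (Fin n) ℝ) - (1:ℝ) • C) := by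
        rw [one_smul]; exact hcont
      exact ContinuousAt.comp (g := Ring.inverse)
        (f := fun s : ℝ => (1:Matrix (Fin n) (Fin n) ℝ) - s • C) (x := (1:ℝ)) hcont'
        hmap.continuousAt
    exact ((entryCLM i j).continuous.continuousAt).comp h2
  set f : ℝ → ℝ := fun s => (Ring.inverse ((1:Matrix (Fin n) (Fin n) ℝ) - s • C)) i j with hf
  have hseq : Filter.Tendsto (fun k : ℕ => 1 - 1/((k:ℝ)+1)) Filter.atTop (nhds 1) := by
    have := tendsto_one_div_add_atTop_nhds_zero_nat (𝕜 := ℝ)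
    have h := Filter.Tendsto.sub
      (tendsto_const_nhds (x := (1:ℝ)) (f := (Filter.atTop : Filter ℕ))) this
    simpa using h
  have hlim : Filter.Tendsto (fun k : ℕ => f (1 - 1/((k:ℝ)+1))) Filter.atTop (nhds (f 1)) :=
    hfc.tendsto.comp hseq
  have hfin : f 1 = (1 - C)⁻¹ i j := by
    rw [hf]
    simp only [one_smul]
    rw [← Matrix.nonsing_inv_eq_ringInverse]
  rw [← hfin]
  refine ge_of_tendsto hlim ?_
  refine Filter.Eventually.of_forall (fun k => ?_)
  have h0 : (0:ℝ) ≤ 1 - 1/((k:ℝ)+1) := by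
    have : 1/((k:ℝ)+1) ≤ 1 := by
      rw [div_le_one (by positivity)]; linarith [Nat.cast_nonneg (α := ℝ) k]
    linarith
  have h1 : 1 - 1/((k:ℝ)+1) < 1 := by
    have : 0 < 1/((k:ℝ)+1) := by positivity
    linarith
  exact hnn _ h0 h1

end MatrixNorm

lemma inv_nonneg_sub {n : ℕ} (A : Matrix (Fin n) (Fin n) ℝ) (hA : ∀ i j, 0 ≤ A i j)
    (v : Fin n → ℝ) (hv : ∀ i, 0 < v i) (hAv : ∀ i, (A *ᵥ v) i ≤ v i)
    (hdet : IsUnit (1 - A).det) : ∀ i j, 0 ≤ (1 - A)⁻¹ i j := by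
  set D := Matrix.diagonal v with hD
  set Dinv := Matrix.diagonal (fun i => (v i)⁻¹) with hDinv
  have hDD : Dinv * D = 1 := by
    rw [hD, hDinv, Matrix.diagonal_mul_diagonal]
    convert Matrix.diagonal_one
    exact inv_mul_cancel₀ (hv _).ne'
  have hDD' : D * Dinv = 1 := by
    rw [hD, hDinv, Matrix.diagonal_mul_diagonal]
    convert Matrix.diagonal_one
    exact mul_inv_cancel₀ (hv _).ne'
  set C := Dinv * A * D with hC
  have hCentry : ∀ i j, C i j = (v i)⁻¹ * A i j * v j := by
    intro i j
    rw [hC, hD, hDinv, Matrix.mul_diagonal, Matrix.diagonal_mul]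
  have h1C : (1 : Matrix (Fin n) (Fin n) ℝ) - C = Dinv * (1 - A) * D := by
    rw [Matrix.mul_sub, Matrix.sub_mul, Matrix.mul_one, hDD, hC]
  have hdetC : IsUnit (1 - C).det := by
    rw [h1C, Matrix.det_mul, Matrix.det_mul]
    have h1 : (Dinv.det) * (D.det) = 1 := by rw [← Matrix.det_mul, hDD, Matrix.det_one]
    have heq : Dinv.det * (1-A).det * D.det = (1-A).det := by
      rw [mul_comm Dinv.det, mul_assoc, h1, mul_one]
    rw [heq]; exact hdet
  have hCnn : ∀ i j, 0 ≤ C i j := by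
    intro i j; rw [hCentry]
    exact mul_nonneg (mul_nonneg (inv_nonneg.mpr (hv i).le) (hA i j)) (hv j).le
  have hrowC : ∀ i, ∑ j, C i j ≤ 1 := by
    intro i
    have hs : ∑ j, C i j = (v i)⁻¹ * (A *ᵥ v) i := by
      simp only [hCentry, Matrix.mulVec, dotProduct, Finset.mul_sum]
      exact Finset.sum_congr rfl (fun j _ => by ring)
    rw [hs]
    calc (v i)⁻¹ * (A *ᵥ v) i ≤ (v i)⁻¹ * v i :=
          mul_le_mul_of_nonneg_left (hAv i) (inv_nonneg.mpr (hv i).le)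
      _ = 1 := inv_mul_cancel₀ (hv i).ne'
  have hinvC := core_inv_nonneg C hCnn hrowC hdetC
  have h1A : (1 : Matrix (Fin n) (Fin n) ℝ) - A = D * (1 - C) * Dinv := by
    rw [h1C]
    have : D * (Dinv * (1 - A) * D) * Dinv = (D * Dinv) * (1 - A) * (D * Dinv) := by
      simp only [Matrix.mul_assoc]
    rw [this, hDD', Matrix.one_mul, Matrix.mul_one]
  have hinv : (1 - A)⁻¹ = D * (1 - C)⁻¹ * Dinv := by
    apply Matrix.inv_eq_right_inv
    rw [h1A]
    have hinvC1 : (1 - C) * (1 - C)⁻¹ = 1 := Matrix.mul_nonsing_inv _ hdetC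
    calc D * (1 - C) * Dinv * (D * (1 - C)⁻¹ * Dinv)
        = D * ((1 - C) * ((Dinv * D) * ((1 - C)⁻¹ * Dinv))) := by
          simp only [Matrix.mul_assoc]
      _ = D * ((1 - C) * (1 - C)⁻¹) * Dinv := by
          rw [hDD, Matrix.one_mul]; simp only [Matrix.mul_assoc]
      _ = D * Dinv := by rw [hinvC1, Matrix.mul_one]
      _ = 1 := hDD'
  intro i j
  rw [hinv]
  have he : (D * (1 - C)⁻¹ * Dinv) i j = v i * (1 - C)⁻¹ i j * (v j)⁻¹ := by
    rw [hD, hDinv, Matrix.mul_diagonal, Matrix.diagonal_mul]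
  rw [he]
  exact mul_nonneg (mul_nonneg (hv i).le (hinvC i j)) (inv_nonneg.mpr (hv j).le)

/-! ### The Newton step estimate -/

lemma newton_step {n : ℕ} (P : Fin n → MvPolynomial (Fin n) ℝ)
    (hdeg : ∀ i, (P i).totalDegree ≤ 2) (hpos : ∀ i m, 0 ≤ (P i).coeff m)
    (q : Fin n → ℝ) (hq0 : 0 ≤ q) (hfix : evalVec P q = q)
    (v : Fin n → ℝ) (hv : ∀ i, 0 < v i) (hBv : jacob P q *ᵥ v ≤ v)
    (z : Fin n → ℝ) (hz0 : 0 ≤ z) (hzq : z ≤ q)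
    (hdet : IsUnit (1 - jacob P z).det)
    (t : ℝ) (ht : 0 ≤ t) (hd : ∀ i, q i - z i ≤ t * v i) :
    ∀ i, q i - newtonOp P z i ≤ t/2 * v i := by
  set B := jacob P z with hB
  set Bq := jacob P q with hBq
  set M := (1 : Matrix (Fin n) (Fin n) ℝ) - B with hM
  set d : Fin n → ℝ := fun i => q i - z i with hdd
  have hB0 : ∀ i j, 0 ≤ B i j := fun i j =>
    eval_nonneg' _ (coeff_pderiv_nonneg' _ (hpos i) j) (fun l => hz0 l)
  have hBm : ∀ i j, B i j ≤ Bq i j := fun i j =>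
    eval_mono' _ (coeff_pderiv_nonneg' _ (hpos i) j) (fun l => hz0 l) (fun l => hzq l)
  have hBqv : ∀ i, (Bq *ᵥ v) i ≤ v i := fun i => hBv i
  have hBv' : ∀ i, (B *ᵥ v) i ≤ v i := by
    intro i
    have h1 : (B *ᵥ v) i ≤ (Bq *ᵥ v) i := by
      simp only [Matrix.mulVec, dotProduct]
      exact Finset.sum_le_sum (fun j _ => mul_le_mul_of_nonneg_right (hBm i j) (hv j).le)
    exact h1.trans (hBqv i)
  -- Taylor identity, coordinatewise
  have htay : ∀ i, evalVec P q i - evalVec P z i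
      = (1/2) * ∑ j, (B i j + Bq i j) * d j := by
    intro i
    exact taylor2 (P i) (hdeg i) z q
  set Qd : Fin n → ℝ := fun i => (1/2) * ∑ j, (Bq i j - B i j) * d j with hQd
  have key : ∀ i, (M *ᵥ d) i = (evalVec P z i - z i) + Qd i := by
    intro i
    have h1 := htay i
    have h2 : evalVec P q i = q i := congrFun hfix i
    have hMd : (M *ᵥ d) i = d i - ∑ j, B i j * d j := by
      rw [hM, Matrix.sub_mulVec, Matrix.one_mulVec]
      rfl
    have hsum1 : ∑ j, (B i j + Bq i j) * d j
        = (∑ j, B i j * d j) + ∑ j, Bq i j * d j := by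
      rw [← Finset.sum_add_distrib]
      exact Finset.sum_congr rfl (fun j _ => by ring)
    have hsum2 : ∑ j, (Bq i j - B i j) * d j
        = (∑ j, Bq i j * d j) - ∑ j, B i j * d j := by
      rw [← Finset.sum_sub_distrib]
      exact Finset.sum_congr rfl (fun j _ => by ring)
    rw [hMd]
    have hQdi : Qd i = (1/2) * ((∑ j, Bq i j * d j) - ∑ j, B i j * d j) := by
      simp only [hQd]; rw [hsum2]
    rw [hQdi]
    rw [hsum1] at h1
    have hdi : d i = q i - z i := rfl
    rw [h2] at h1
    rw [hdi]
    linarith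
  -- vector form of key
  have keyv : M *ᵥ d = (evalVec P z - z) + Qd := by
    funext i; rw [key i]; rfl
  have hMinv : M⁻¹ * M = 1 := Matrix.nonsing_inv_mul _ hdet
  have hMdinv : M⁻¹ *ᵥ (M *ᵥ d) = d := by
    rw [Matrix.mulVec_mulVec, hMinv, Matrix.one_mulVec]
  -- q - N z = M⁻¹ *ᵥ Qd
  have hNz : ∀ i, q i - newtonOp P z i = (M⁻¹ *ᵥ Qd) i := by
    intro i
    have : newtonOp P z = z + M⁻¹ *ᵥ (evalVec P z - z) := rfl
    rw [this]
    have hev : evalVec P z - z = M *ᵥ d - Qd := by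
      rw [keyv]; abel
    rw [hev, Matrix.mulVec_sub, hMdinv]
    simp only [Pi.add_apply, Pi.sub_apply]
    have : d i = q i - z i := rfl
    linarith [this]
  -- residual nonnegativity
  set u : Fin n → ℝ := fun i => t/2 * v i with hu
  set w : Fin n → ℝ := fun i => (M *ᵥ u) i - Qd i with hw
  have hwpos : ∀ i, 0 ≤ w i := by
    intro i
    have hMu : (M *ᵥ u) i = t/2 * v i - ∑ j, B i j * (t/2 * v j) := by
      rw [hM, Matrix.sub_mulVec, Matrix.one_mulVec]
      rfl
    have hQle : Qd i ≤ (1/2) * ∑ j, (Bq i j - B i j) * (t * v j) := by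
      rw [hQd]
      refine mul_le_mul_of_nonneg_left (Finset.sum_le_sum (fun j _ => ?_)) (by norm_num)
      exact mul_le_mul_of_nonneg_left (hd j) (sub_nonneg.mpr (hBm i j))
    have hsB : ∑ j, B i j * (t/2 * v j) = t/2 * ∑ j, B i j * v j := by
      rw [Finset.mul_sum]
      exact Finset.sum_congr rfl (fun j _ => by ring)
    have hsBq : (1/2) * ∑ j, (Bq i j - B i j) * (t * v j)
        = t/2 * ((∑ j, Bq i j * v j) - ∑ j, B i j * v j) := by
      rw [← Finset.sum_sub_distrib, Finset.mul_sum, Finset.mul_sum]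
      exact Finset.sum_congr rfl (fun j _ => by ring)
    have hBvi : ∑ j, B i j * v j = (B *ᵥ v) i := rfl
    have hBqvi : ∑ j, Bq i j * v j = (Bq *ᵥ v) i := rfl
    have h5 := hBqv i
    have h6 := hBv' i
    simp only [hw]
    rw [hMu, hsB]
    have : Qd i ≤ t/2 * ((Bq *ᵥ v) i - (B *ᵥ v) i) := by
      refine hQle.trans ?_
      rw [hsBq, hBvi, hBqvi]
    nlinarith [this, mul_nonneg ht ((hv i).le)]
  -- nonnegativity of M⁻¹ entries
  have hMinvnn : ∀ i j, 0 ≤ M⁻¹ i j := inv_nonneg_sub B hB0 v hv hBv' hdet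
  -- conclude
  intro i
  have hMuinv : M⁻¹ *ᵥ (M *ᵥ u) = u := by
    rw [Matrix.mulVec_mulVec, hMinv, Matrix.one_mulVec]
  have hwv : (M⁻¹ *ᵥ w) i = u i - (M⁻¹ *ᵥ Qd) i := by
    have : w = M *ᵥ u - Qd := by funext l; simp only [hw]; rfl
    rw [this, Matrix.mulVec_sub, hMuinv]
    rfl
  have hnn : 0 ≤ (M⁻¹ *ᵥ w) i := by
    simp only [Matrix.mulVec, dotProduct]
    exact Finset.sum_nonneg (fun j _ => mul_nonneg (hMinvnn i j) (hwpos j))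
  rw [hwv] at hnn
  rw [hNz i]
  have : u i = t/2 * v i := rfl
  linarith [hnn, this]

theorem stmt16 {n : ℕ} (hn : 0 < n) (P : Fin n → MvPolynomial (Fin n) ℝ)
    (hdeg : ∀ i, (P i).totalDegree ≤ 2) (hpos : ∀ i m, 0 ≤ (P i).coeff m)
    (q : Fin n → ℝ) (hq0 : 0 ≤ q) (hq1 : q ≤ 1) (hfix : evalVec P q = q)
    (hleast : ∀ r : Fin n → ℝ, 0 ≤ r → evalVec P r = r → q ≤ r)
    (v : Fin n → ℝ) (hv : ∀ i, 0 < v i) (hBv : jacob P q *ᵥ v ≤ v)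
    (ε : ℝ) (hε0 : 0 < ε) (hε1 : ε < 1)
    (h : ℕ)
    (hh : (2 : ℤ) + ⌈Real.logb 2 ((⨆ i, v i) / ((⨅ i, v i) * ε))⌉ ≤ (h : ℤ))
    (x : ℕ → Fin n → ℝ) (hx0 : x 0 = 0)
    (hdef : ∀ k, IsUnit (1 - jacob P (x k)).det)
    (hround : ∀ k i,
      x (k + 1) i = (2 : ℝ) ^ (-(h : ℤ)) * (⌊max (newtonOp P (x k) i) 0 * 2 ^ h⌋ : ℤ))
    (hbounds : ∀ k, 0 ≤ x k ∧ x k ≤ q) :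
    ∀ g : ℕ, h - 1 ≤ g → ∀ i, |q i - x g i| ≤ ε := by
  haveI : Nonempty (Fin n) := ⟨⟨0, hn⟩⟩
  set vmin := ⨅ i, v i with hvmin
  set vmax := ⨆ i, v i with hvmax
  have hbddA : BddAbove (Set.range v) := (Set.finite_range v).bddAbove
  have hbddB : BddBelow (Set.range v) := (Set.finite_range v).bddBelow
  have hvmaxle : ∀ i, v i ≤ vmax := fun i => le_ciSup hbddA i
  have hvminle : ∀ i, vmin ≤ v i := fun i => ciInf_le hbddB i
  obtain ⟨i0, hi0⟩ := Finite.exists_min v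
  have hvminpos : 0 < vmin := lt_of_lt_of_le (hv i0) (le_ciInf (fun j => hi0 j))
  have hvmaxpos : 0 < vmax := lt_of_lt_of_le (hv i0) (hvmaxle i0)
  -- from hh : vmax / (vmin * ε) ≤ 2 ^ (h - 2)
  have hRpos : 0 < vmax / (vmin * ε) := div_pos hvmaxpos (mul_pos hvminpos hε0)
  have hR : vmax / (vmin * ε) ≤ (2:ℝ) ^ ((h:ℤ) - 2) := by
    have h1 : (⌈Real.logb 2 (vmax / (vmin * ε))⌉ : ℤ) ≤ (h:ℤ) - 2 := by omega
    have h2 : Real.logb 2 (vmax / (vmin * ε)) ≤ ((h:ℤ) - 2 : ℤ) := by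
      calc Real.logb 2 (vmax / (vmin * ε)) ≤ (⌈Real.logb 2 (vmax / (vmin * ε))⌉ : ℝ) :=
            Int.le_ceil _
        _ ≤ (((h:ℤ) - 2 : ℤ) : ℝ) := by exact_mod_cast h1
    have h3 := (Real.logb_le_iff_le_rpow one_lt_two hRpos).mp h2
    rwa [Real.rpow_intCast] at h3
  -- main induction
  have main : ∀ k, ∀ i, q i - x k i
      ≤ ((2:ℝ) ^ (-(k:ℤ)) + (2:ℝ) ^ (1 - (h:ℤ))) / vmin * v i := by
    intro k
    induction k with
    | zero =>
      intro i
      rw [hx0]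
      simp only [Pi.zero_apply, sub_zero, Nat.cast_zero, neg_zero, zpow_zero]
      have h1 : (1:ℝ) ≤ v i / vmin := (one_le_div hvminpos).mpr (hvminle i)
      have h2 : (0:ℝ) < (2:ℝ) ^ (1 - (h:ℤ)) := by positivity
      have heq : (1 + (2:ℝ) ^ (1 - (h:ℤ))) / vmin * v i
          = (1 + (2:ℝ) ^ (1 - (h:ℤ))) * (v i / vmin) := by ring
      rw [heq]
      calc q i ≤ 1 := hq1 i
        _ = 1 * 1 := (one_mul 1).symm
        _ ≤ (1 + (2:ℝ) ^ (1 - (h:ℤ))) * (v i / vmin) := by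
            refine mul_le_mul (by linarith) h1 (by norm_num) (by linarith)
    | succ k ih =>
      set t := ((2:ℝ) ^ (-(k:ℤ)) + (2:ℝ) ^ (1 - (h:ℤ))) / vmin with htdef
      have ht : 0 ≤ t := by positivity
      have hd' : ∀ i, q i - x k i ≤ t * v i := fun i => ih i
      have hstep := newton_step P hdeg hpos q hq0 hfix v hv hBv (x k)
        (hbounds k).1 (hbounds k).2 (hdef k) t ht hd'
      intro i
      set N := newtonOp P (x k) i with hN
      have h2h : (0:ℝ) < (2:ℝ) ^ (-(h:ℤ)) := by positivity
      have hprod : (2:ℝ) ^ (-(h:ℤ)) * (2:ℝ) ^ (h:ℕ) = 1 := by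
        rw [← zpow_natCast (2:ℝ) h, ← zpow_add₀ (two_ne_zero)]
        simp
      have hx1 : N - (2:ℝ) ^ (-(h:ℤ)) ≤ x (k+1) i := by
        rw [hround k i]
        have hfl : max N 0 * 2 ^ h - 1 < (⌊max N 0 * 2 ^ h⌋ : ℝ) := Int.sub_one_lt_floor _
        calc N - (2:ℝ) ^ (-(h:ℤ)) ≤ max N 0 - (2:ℝ) ^ (-(h:ℤ)) := by
              have := le_max_left N 0; linarith
          _ = (2:ℝ) ^ (-(h:ℤ)) * (max N 0 * 2 ^ h - 1) := by
              have : (2:ℝ) ^ (-(h:ℤ)) * (max N 0 * 2 ^ h - 1)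
                  = max N 0 * ((2:ℝ) ^ (-(h:ℤ)) * (2:ℝ) ^ (h:ℕ)) - (2:ℝ) ^ (-(h:ℤ)) := by
                ring
              rw [this, hprod, mul_one]
          _ ≤ (2:ℝ) ^ (-(h:ℤ)) * (⌊max N 0 * 2 ^ h⌋ : ℤ) := by
              exact mul_le_mul_of_nonneg_left (by exact_mod_cast hfl.le) h2h.le
      have hqx : q i - x (k+1) i ≤ (q i - N) + (2:ℝ) ^ (-(h:ℤ)) := by linarith
      have hvr : (1:ℝ) ≤ v i / vmin := (one_le_div hvminpos).mpr (hvminle i)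
      have hstep' : q i - N ≤ t/2 * v i := hstep i
      have hzp1 : (2:ℝ) ^ (-((k:ℤ)+1)) = (2:ℝ) ^ (-(k:ℤ)) / 2 := by
        rw [show -((k:ℤ)+1) = -(k:ℤ) - 1 by ring, zpow_sub₀ (two_ne_zero)]
        norm_num
      have hzp2 : (2:ℝ) ^ (1-(h:ℤ)) = 2 * (2:ℝ) ^ (-(h:ℤ)) := by
        rw [show (1:ℤ)-(h:ℤ) = -(h:ℤ) + 1 by ring, zpow_add₀ (two_ne_zero)]
        ring
      have hcast : (-(((k:ℕ)+1:ℕ)):ℤ) = -((k:ℤ)+1) := by push_cast; ring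
      have goal_eq : ((2:ℝ) ^ (-(((k:ℕ)+1:ℕ)):ℤ) + (2:ℝ) ^ (1 - (h:ℤ))) / vmin * v i
          = t/2 * v i + (2:ℝ) ^ (-(h:ℤ)) * (v i / vmin) := by
        rw [hcast, hzp1, htdef, hzp2]
        ring
      rw [goal_eq]
      have h2hv : (2:ℝ) ^ (-(h:ℤ)) ≤ (2:ℝ) ^ (-(h:ℤ)) * (v i / vmin) := by
        nlinarith [h2h, hvr]
      linarith
  -- conclusion
  intro g hg i
  have habs : |q i - x g i| = q i - x g i :=
    abs_of_nonneg (sub_nonneg.mpr ((hbounds g).2 i))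
  rw [habs]
  have hgle : -(g:ℤ) ≤ 1 - (h:ℤ) := by
    have : h ≤ g + 1 := by omega
    have : (h:ℤ) ≤ (g:ℤ) + 1 := by exact_mod_cast this
    omega
  have hmono : (2:ℝ) ^ (-(g:ℤ)) ≤ (2:ℝ) ^ (1 - (h:ℤ)) :=
    zpow_le_zpow_right₀ one_le_two hgle
  have h22 : (2:ℝ) ^ (1 - (h:ℤ)) + (2:ℝ) ^ (1 - (h:ℤ)) = (2:ℝ) ^ (2 - (h:ℤ)) := by
    rw [show (2:ℤ)-(h:ℤ) = (1-(h:ℤ)) + 1 by ring, zpow_add₀ (two_ne_zero)]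
    ring
  have hbound := main g i
  have hc1 : ((2:ℝ) ^ (-(g:ℤ)) + (2:ℝ) ^ (1 - (h:ℤ))) / vmin * v i
      ≤ (2:ℝ) ^ (2 - (h:ℤ)) / vmin * vmax := by
    rw [← h22]
    have hnum : (0:ℝ) ≤ ((2:ℝ) ^ (-(g:ℤ)) + (2:ℝ) ^ (1 - (h:ℤ))) / vmin := by positivity
    have hnum2 : ((2:ℝ) ^ (-(g:ℤ)) + (2:ℝ) ^ (1 - (h:ℤ))) / vmin
        ≤ ((2:ℝ) ^ (1 - (h:ℤ)) + (2:ℝ) ^ (1 - (h:ℤ))) / vmin := by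
      gcongr
    exact mul_le_mul hnum2 (hvmaxle i) (hv i).le (by positivity)
  have hfinal : (2:ℝ) ^ (2 - (h:ℤ)) / vmin * vmax ≤ ε := by
    have hvm : vmax ≤ (2:ℝ) ^ ((h:ℤ) - 2) * (vmin * ε) :=
      (div_le_iff₀ (mul_pos hvminpos hε0)).mp hR
    have hinv2 : (2:ℝ) ^ (2 - (h:ℤ)) * (2:ℝ) ^ ((h:ℤ) - 2) = 1 := by
      rw [← zpow_add₀ (two_ne_zero)]
      norm_num
    rw [div_mul_eq_mul_div, div_le_iff₀ hvminpos]
    calc (2:ℝ) ^ (2 - (h:ℤ)) * vmax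
        ≤ (2:ℝ) ^ (2 - (h:ℤ)) * ((2:ℝ) ^ ((h:ℤ) - 2) * (vmin * ε)) := by
          exact mul_le_mul_of_nonneg_left hvm (by positivity)
      _ = vmin * ε := by rw [← mul_assoc, hinv2, one_mul]
      _ = ε * vmin := mul_comm _ _
  calc q i - x g i ≤ ((2:ℝ) ^ (-(g:ℤ)) + (2:ℝ) ^ (1 - (h:ℤ))) / vmin * v i := hbound
    _ ≤ (2:ℝ) ^ (2 - (h:ℤ)) / vmin * vmax := hc1
    _ ≤ ε := hfinal
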